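/- Let Q : L²(μ) → L²(μ) be a bounded linear operator and q ∈ (0,1) be such that for all nonempty L, L' ⊆ 𝒯 and all u ∈ L²(μ): ‖1_L · Q(1_{L'} · u)‖₂ ≤ 2·q^{max(δ(L,L')−1, 0)}·‖1_{L'} · u‖₂. Let γ ≥ 1 be a real with γ·q < 1, and let ρ : Ω → ℝ be a measurable function such that for every T ∈ 𝒯: 0 < essinf_{A_T} ρ ≤ esssup_{A_T} ρ < ∞ and esssup_{A_T} ρ ≤ γ·essinf_{A_T} ρ, and such that esssup_{A_{T'}} ρ ≤ γ^{δ(T,T')}·esssup_{A_T} ρ for all T, T' ∈ 𝒯. Then ‖ρ·Qu‖₂ ≤ (6·γ³/(1 − γ·q))·‖ρ·u‖₂ for all u ∈ L²(μ). -/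

import Mathlib

open MeasureTheory

/-- Multiplication of an `L²` function by the indicator function of a measurable set. -/
noncomputable def indMul {Ω : Type*} [MeasurableSpace Ω] {μ : Measure Ω}
    (s : Set Ω) (hs : MeasurableSet s) (u : Lp ℝ 2 μ) : Lp ℝ 2 μ :=
  ((Lp.memLp u).indicator hs).toLp (s.indicator u)

/-- The distance `δ(L, L') = min {δ(T,T') : T ∈ L, T' ∈ L'}` between two collections. -/
noncomputable def setDist {𝒯 : Type*} (δ : 𝒯 → 𝒯 → ℕ) (L L' : Set 𝒯) : ℕ :=
  sInf {n | ∃ T ∈ L, ∃ T' ∈ L', δ T T' = n}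

/-- The union `⋃ T ∈ L, A T` of measurable sets over a collection is measurable. -/
theorem unionMeasurable {Ω 𝒯 : Type*} [MeasurableSpace Ω] [Countable 𝒯] {A : 𝒯 → Set Ω}
    (hA : ∀ T, MeasurableSet (A T)) (L : Set 𝒯) : MeasurableSet (⋃ T ∈ L, A T) :=
  MeasurableSet.biUnion (Set.to_countable L) fun T _ => hA T


lemma geomSumBound {x : ℝ} (hx0 : 0 ≤ x) (hx1 : x < 1) (S : Finset ℕ) :
    ∑ k ∈ S, x ^ k ≤ (1 - x)⁻¹ :=
  le_trans (Summable.sum_le_tsum S (fun i _ => pow_nonneg hx0 i)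
    (summable_geometric_of_lt_one hx0 hx1)) (le_of_eq (tsum_geometric_of_lt_one hx0 hx1))

noncomputable def gker (γ q : ℝ) (d : ℤ) : ℝ := 2 * γ ^ (d + 2) * q ^ (d.natAbs - 1)

lemma gker_nonneg {γ q : ℝ} (hγ : 0 < γ) (hq : 0 ≤ q) (d : ℤ) : 0 ≤ gker γ q d := by
  unfold gker; positivity

lemma gker_sum_le0 {γ q : ℝ} (hγ : 1 ≤ γ) (hq0 : 0 < q) (hq1 : q < 1) (hγq : γ * q < 1)
    (S : Finset ℤ) : ∑ d ∈ S, gker γ q d ≤ 6 * γ ^ 3 / (1 - γ * q) := by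
  classical
  have hγ0 : (0:ℝ) < γ := lt_of_lt_of_le one_pos hγ
  have h1γq : 0 < 1 - γ * q := by linarith
  have hγq0 : 0 ≤ γ * q := by positivity
  have hqγ : q / γ < 1 := (div_lt_one hγ0).2 (lt_of_lt_of_le hq1 hγ)
  have hqγ0 : 0 ≤ q / γ := by positivity
  have hsplit : ∑ d ∈ S, gker γ q d
      = ∑ d ∈ S.filter (fun d => 0 < d), gker γ q d
        + (∑ d ∈ (S.filter (fun d => ¬ 0 < d)).filter (fun d => d = 0), gker γ q d
           + ∑ d ∈ (S.filter (fun d => ¬ 0 < d)).filter (fun d => ¬ d = 0), gker γ q d) := by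
    rw [Finset.sum_filter_add_sum_filter_not, Finset.sum_filter_add_sum_filter_not]
  have hpos : ∑ d ∈ S.filter (fun d => 0 < d), gker γ q d ≤ 2 * γ ^ 3 / (1 - γ * q) := by
    have heq : ∀ d ∈ S.filter (fun d => 0 < d),
        gker γ q d = 2 * γ ^ 3 * (γ * q) ^ (d.natAbs - 1) := by
      intro d hd
      have hd0 : 0 < d := (Finset.mem_filter.1 hd).2
      obtain ⟨m, hm⟩ : ∃ m : ℕ, d.natAbs - 1 = m := ⟨_, rfl⟩
      have hdm : d = (m : ℤ) + 1 := by omega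
      have hγpow : γ ^ (d + 2) = γ ^ 3 * γ ^ m := by
        rw [hdm, show ((m:ℤ) + 1 + 2) = ((m + 3 : ℕ) : ℤ) by push_cast; ring, zpow_natCast]
        ring
      rw [gker, hγpow, hm, mul_pow]
      ring
    rw [Finset.sum_congr rfl heq, ← Finset.mul_sum]
    have hinj : ∀ x ∈ S.filter (fun d => 0 < d), ∀ y ∈ S.filter (fun d => 0 < d),
        x.natAbs - 1 = y.natAbs - 1 → x = y := by
      intro x hx y hy h
      have hx0 : 0 < x := (Finset.mem_filter.1 hx).2
      have hy0 : 0 < y := (Finset.mem_filter.1 hy).2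
      omega
    have himg : ∑ d ∈ S.filter (fun d => 0 < d), (γ * q) ^ (d.natAbs - 1)
        = ∑ k ∈ (S.filter (fun d => 0 < d)).image (fun d => d.natAbs - 1), (γ * q) ^ k :=
      (Finset.sum_image hinj).symm
    rw [himg, div_eq_mul_inv]
    exact mul_le_mul_of_nonneg_left (geomSumBound hγq0 hγq _) (by positivity)
  have hzero : ∑ d ∈ (S.filter (fun d => ¬ 0 < d)).filter (fun d => d = 0), gker γ q d
      ≤ 2 * γ ^ 2 := by
    have hsub : (S.filter (fun d => ¬ 0 < d)).filter (fun d => d = 0) ⊆ {0} := by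
      intro d hd
      simp only [Finset.mem_filter, Finset.mem_singleton] at hd ⊢
      exact hd.2
    refine le_trans (Finset.sum_le_sum_of_subset_of_nonneg hsub
      (fun i _ _ => gker_nonneg hγ0 hq0.le i)) ?_
    rw [Finset.sum_singleton, gker]
    rw [show ((0:ℤ) + 2) = ((2:ℕ):ℤ) by norm_num, zpow_natCast]
    norm_num
  have hneg : ∑ d ∈ (S.filter (fun d => ¬ 0 < d)).filter (fun d => ¬ d = 0), gker γ q d
      ≤ 2 * γ * (1 - q / γ)⁻¹ := by
    have heq : ∀ d ∈ (S.filter (fun d => ¬ 0 < d)).filter (fun d => ¬ d = 0),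
        gker γ q d = 2 * γ * (q / γ) ^ (d.natAbs - 1) := by
      intro d hd
      simp only [Finset.mem_filter] at hd
      have hd0 : d < 0 := by omega
      obtain ⟨m, hm⟩ : ∃ m : ℕ, d.natAbs - 1 = m := ⟨_, rfl⟩
      have hdm : d = -((m : ℤ) + 1) := by omega
      have hγpow : γ ^ (d + 2) = γ * (γ ^ m)⁻¹ := by
        rw [hdm, show (-((m:ℤ) + 1) + 2) = 1 - (m : ℤ) by ring, zpow_sub₀ hγ0.ne',
          zpow_one, zpow_natCast, div_eq_mul_inv]
      rw [gker, hγpow, hm, div_pow]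
      field_simp
    rw [Finset.sum_congr rfl heq, ← Finset.mul_sum]
    have hinj : ∀ x ∈ (S.filter (fun d => ¬ 0 < d)).filter (fun d => ¬ d = 0),
        ∀ y ∈ (S.filter (fun d => ¬ 0 < d)).filter (fun d => ¬ d = 0),
        x.natAbs - 1 = y.natAbs - 1 → x = y := by
      intro x hx y hy h
      simp only [Finset.mem_filter] at hx hy
      omega
    have himg : ∑ d ∈ (S.filter (fun d => ¬ 0 < d)).filter (fun d => ¬ d = 0),
          (q / γ) ^ (d.natAbs - 1)
        = ∑ k ∈ ((S.filter (fun d => ¬ 0 < d)).filter (fun d => ¬ d = 0)).image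
            (fun d => d.natAbs - 1), (q / γ) ^ k :=
      (Finset.sum_image hinj).symm
    rw [himg]
    exact mul_le_mul_of_nonneg_left (geomSumBound hqγ0 hqγ _) (by positivity)
  have hγq2 : 0 < γ - q := by linarith
  have e1 : (1 - q / γ)⁻¹ = γ / (γ - q) := by
    rw [one_sub_div hγ0.ne', inv_div]
  have hsq : 1 ≤ γ ^ 2 := by nlinarith
  have h2 : 2 * γ ^ 2 ≤ 2 * γ ^ 3 / (1 - γ * q) := by
    rw [le_div_iff₀ h1γq]; nlinarith
  have h3 : 2 * γ * (1 - q / γ)⁻¹ ≤ 2 * γ ^ 3 / (1 - γ * q) := by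
    rw [e1]
    have e2 : 2 * γ * (γ / (γ - q)) = 2 * γ ^ 2 / (γ - q) := by ring
    rw [e2, div_le_div_iff₀ hγq2 h1γq]
    nlinarith
  have hfin : 2 * γ ^ 3 / (1 - γ * q) + (2 * γ ^ 2 + 2 * γ * (1 - q / γ)⁻¹)
      ≤ 6 * γ ^ 3 / (1 - γ * q) := by
    have : 6 * γ ^ 3 / (1 - γ * q) = 2 * γ ^ 3 / (1 - γ * q) + (2 * γ ^ 3 / (1 - γ * q)
        + 2 * γ ^ 3 / (1 - γ * q)) := by ring
    rw [this]
    linarith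
  rw [hsplit]
  refine le_trans ?_ hfin
  exact add_le_add hpos (add_le_add hzero hneg)

lemma schurBound {ι : Type*} (J : Finset ι) (K : ι → ι → ℝ) (r : ι → ℝ) (C : ℝ)
    (hK : ∀ j j', 0 ≤ K j j') (hC : 0 ≤ C)
    (hrow : ∀ j ∈ J, ∑ j' ∈ J, K j j' ≤ C) (hcol : ∀ j' ∈ J, ∑ j ∈ J, K j j' ≤ C) :
    ∑ j ∈ J, (∑ j' ∈ J, K j j' * r j') ^ 2 ≤ C ^ 2 * ∑ j ∈ J, r j ^ 2 := by
  have step1 : ∀ j ∈ J, (∑ j' ∈ J, K j j' * r j') ^ 2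
      ≤ C * ∑ j' ∈ J, K j j' * r j' ^ 2 := by
    intro j hj
    have cs := Finset.sum_mul_sq_le_sq_mul_sq J (fun j' => Real.sqrt (K j j'))
      (fun j' => Real.sqrt (K j j') * r j')
    have e1 : ∀ j', Real.sqrt (K j j') * (Real.sqrt (K j j') * r j') = K j j' * r j' := by
      intro j'; rw [← mul_assoc, Real.mul_self_sqrt (hK j j')]
    have e2 : ∀ j', Real.sqrt (K j j') ^ 2 = K j j' := fun j' => Real.sq_sqrt (hK j j')
    have e3 : ∀ j', (Real.sqrt (K j j') * r j') ^ 2 = K j j' * r j' ^ 2 := by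
      intro j'; rw [mul_pow, e2]
    simp only [e1, e2, e3] at cs
    refine le_trans cs ?_
    exact mul_le_mul_of_nonneg_right (hrow j hj)
      (Finset.sum_nonneg fun j' _ => mul_nonneg (hK j j') (sq_nonneg _))
  calc ∑ j ∈ J, (∑ j' ∈ J, K j j' * r j') ^ 2
      ≤ ∑ j ∈ J, C * ∑ j' ∈ J, K j j' * r j' ^ 2 := Finset.sum_le_sum step1
    _ = C * ∑ j' ∈ J, (∑ j ∈ J, K j j') * r j' ^ 2 := by
        rw [← Finset.mul_sum, Finset.sum_comm]
        congr 1
        exact Finset.sum_congr rfl fun j' _ => (Finset.sum_mul _ _ _).symm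
    _ ≤ C * ∑ j' ∈ J, C * r j' ^ 2 := by
        refine mul_le_mul_of_nonneg_left (Finset.sum_le_sum fun j' hj' => ?_) hC
        exact mul_le_mul_of_nonneg_right (hcol j' hj') (sq_nonneg _)
    _ = C ^ 2 * ∑ j ∈ J, r j ^ 2 := by rw [← Finset.mul_sum]; ring

section LpAux

variable {Ω : Type*} [MeasurableSpace Ω] {μ : Measure Ω}

lemma indMul_coeFn0 (s : Set Ω) (hs : MeasurableSet s) (u : Lp ℝ 2 μ) :
    ⇑(indMul s hs u) =ᵐ[μ] s.indicator ⇑u :=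
  MemLp.coeFn_toLp _

lemma Lp_norm_le_of_ae0 {f g : Lp ℝ 2 μ} (h : ∀ᵐ x ∂μ, ‖f x‖ ≤ ‖g x‖) : ‖f‖ ≤ ‖g‖ := by
  rw [Lp.norm_def, Lp.norm_def]
  exact ENNReal.toReal_mono (Lp.eLpNorm_ne_top g) (eLpNorm_mono_ae h)

lemma coeFn_finset_sum {ι : Type*} (s : Finset ι) (f : ι → Lp ℝ 2 μ) :
    ⇑(∑ i ∈ s, f i) =ᵐ[μ] fun x => ∑ i ∈ s, f i x := by
  classical
  induction s using Finset.induction_on with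
  | empty => simp only [Finset.sum_empty]; exact Lp.coeFn_zero _ _ _
  | insert a s hnot ih =>
    rw [Finset.sum_insert hnot]
    filter_upwards [Lp.coeFn_add (f a) (∑ i ∈ s, f i), ih] with x h1 h2
    rw [Finset.sum_insert hnot, h1]
    simp only [Pi.add_apply, h2]

lemma indMul_sum0 {ι : Type*} (s : Set Ω) (hs : MeasurableSet s) (J : Finset ι)
    (v : ι → Lp ℝ 2 μ) :
    indMul s hs (∑ j ∈ J, v j) = ∑ j ∈ J, indMul s hs (v j) := by
  classical
  apply Lp.ext
  have h1 := indMul_coeFn0 s hs (∑ j ∈ J, v j)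
  have h2 := coeFn_finset_sum J (fun j => indMul s hs (v j))
  have h3 := coeFn_finset_sum J v
  have h4 : ∀ᵐ x ∂μ, ∀ j ∈ J, (indMul s hs (v j)) x = s.indicator (⇑(v j)) x :=
    (Filter.eventually_all_finset J).2 fun j _ => indMul_coeFn0 s hs (v j)
  filter_upwards [h1, h2, h3, h4] with x h1 h2 h3 h4
  rw [h1, h2]
  by_cases hx : x ∈ s
  · rw [Set.indicator_of_mem hx, h3]
    exact Finset.sum_congr rfl fun j hj => by rw [h4 j hj, Set.indicator_of_mem hx]
  · rw [Set.indicator_of_notMem hx]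
    symm
    refine Finset.sum_eq_zero fun j hj => ?_
    rw [h4 j hj, Set.indicator_of_notMem hx]

lemma lp_decomp0 {ι : Type*} [DecidableEq ι] (J : Finset ι) (E : ι → Set Ω)
    (hE : ∀ j, MeasurableSet (E j))
    (hd : ∀ j j', j ≠ j' → Disjoint (E j) (E j'))
    (hcov : ∀ᵐ x ∂μ, ∃ j ∈ J, x ∈ E j) (w : Lp ℝ 2 μ) :
    w = ∑ j ∈ J, indMul (E j) (hE j) w := by
  apply Lp.ext
  have h2 := coeFn_finset_sum J (fun j => indMul (E j) (hE j) w)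
  have h4 : ∀ᵐ x ∂μ, ∀ j ∈ J, (indMul (E j) (hE j) w) x = (E j).indicator (⇑w) x :=
    (Filter.eventually_all_finset J).2 fun j _ => indMul_coeFn0 (E j) (hE j) w
  filter_upwards [h2, h4, hcov] with x h2 h4 hcov
  rw [h2]
  obtain ⟨j₀, hj₀, hx⟩ := hcov
  have : ∀ j ∈ J, (indMul (E j) (hE j) w) x = if j = j₀ then w x else 0 := by
    intro j hj
    rw [h4 j hj]
    by_cases hjj : j = j₀
    · subst hjj; rw [Set.indicator_of_mem hx, if_pos rfl]
    · rw [if_neg hjj, Set.indicator_of_notMem]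
      exact fun hxj => (hd j j₀ hjj).le_bot ⟨hxj, hx⟩
  rw [Finset.sum_congr rfl this, Finset.sum_ite_eq' J j₀ (fun _ => w x), if_pos hj₀]

lemma lp_orth0 (s t : Set Ω) (hs : MeasurableSet s) (ht : MeasurableSet t)
    (hst : Disjoint s t) (v w : Lp ℝ 2 μ) :
    inner (𝕜 := ℝ) (indMul s hs v) (indMul t ht w) = 0 := by
  rw [L2.inner_def]
  have : (fun x => inner (𝕜 := ℝ) ((indMul s hs v) x) ((indMul t ht w) x)) =ᵐ[μ]
      fun _ => (0 : ℝ) := by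
    filter_upwards [indMul_coeFn0 s hs v, indMul_coeFn0 t ht w] with x h1 h2
    simp only [RCLike.inner_apply, starRingEnd_apply, star_trivial, h1, h2]
    by_cases hx : x ∈ s
    · rw [Set.indicator_of_notMem (fun hxt => hst.le_bot ⟨hx, hxt⟩), zero_mul]
    · rw [Set.indicator_of_notMem hx, mul_zero]
  rw [integral_congr_ae this, integral_zero]

lemma pythagoras_sum {H : Type*} [NormedAddCommGroup H] [InnerProductSpace ℝ H]
    {ι : Type*} [DecidableEq ι] (J : Finset ι) (f : ι → H)
    (horth : ∀ j ∈ J, ∀ j' ∈ J, j ≠ j' → inner (𝕜 := ℝ) (f j) (f j') = 0) :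
    ‖∑ j ∈ J, f j‖ ^ 2 = ∑ j ∈ J, ‖f j‖ ^ 2 := by
  rw [← real_inner_self_eq_norm_sq, sum_inner]
  refine Finset.sum_congr rfl fun j hj => ?_
  rw [inner_sum, Finset.sum_eq_single j
    (fun j' hj' hne => horth j hj j' hj' (Ne.symm hne)) (fun h => absurd hj h),
    real_inner_self_eq_norm_sq]

lemma lp_pythagoras0 {ι : Type*} [DecidableEq ι] (J : Finset ι) (E : ι → Set Ω)
    (hE : ∀ j, MeasurableSet (E j))
    (hd : ∀ j j', j ≠ j' → Disjoint (E j) (E j'))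
    (hcov : ∀ᵐ x ∂μ, ∃ j ∈ J, x ∈ E j) (w : Lp ℝ 2 μ) :
    ‖w‖ ^ 2 = ∑ j ∈ J, ‖indMul (E j) (hE j) w‖ ^ 2 := by
  have hw := lp_decomp0 J E hE hd hcov w
  rw [show ‖w‖ = ‖∑ j ∈ J, indMul (E j) (hE j) w‖ from by rw [← hw]]
  exact pythagoras_sum J _ fun j _ j' _ hne =>
    lp_orth0 (E j) (E j') (hE j) (hE j') (hd j j' hne) w w

end LpAux

section Bridge

lemma gker_sum_le' {γ q : ℝ} (hγ : 1 ≤ γ) (hq0 : 0 < q) (hq1 : q < 1) (hγq : γ * q < 1)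
    (S : Finset ℤ) : ∑ d ∈ S, 2 * γ ^ (d + 2) * q ^ (d.natAbs - 1) ≤ 6 * γ ^ 3 / (1 - γ * q) :=
  gker_sum_le0 hγ hq0 hq1 hγq S

variable {Ω : Type*} [MeasurableSpace Ω] {μ : Measure Ω}

lemma indMul_coeFn' (s : Set Ω) (hs : MeasurableSet s) (u : Lp ℝ 2 μ) :
    ⇑(indMul s hs u) =ᵐ[μ] s.indicator ⇑u :=
  indMul_coeFn0 s hs u

lemma Lp_norm_le_of_ae2' {f g : Lp ℝ 2 μ} {F G : Ω → ℝ}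
    (hf : ⇑f =ᵐ[μ] F) (hg : ⇑g =ᵐ[μ] G) (h : ∀ᵐ x ∂μ, ‖F x‖ ≤ ‖G x‖) : ‖f‖ ≤ ‖g‖ := by
  apply Lp_norm_le_of_ae0
  filter_upwards [hf, hg, h] with x h1 h2 h3
  rw [h1, h2]
  exact h3

lemma indMul_sum' {ι : Type*} (s : Set Ω) (hs : MeasurableSet s) (J : Finset ι)
    (v : ι → Lp ℝ 2 μ) :
    indMul s hs (∑ j ∈ J, v j) = ∑ j ∈ J, indMul s hs (v j) :=
  indMul_sum0 s hs J v

lemma lp_decomp' {ι : Type*} [DecidableEq ι] (J : Finset ι) (E : ι → Set Ω)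
    (hE : ∀ j, MeasurableSet (E j))
    (hd : ∀ j j', j ≠ j' → Disjoint (E j) (E j'))
    (hcov : ∀ᵐ x ∂μ, ∃ j ∈ J, x ∈ E j) (w : Lp ℝ 2 μ) :
    w = ∑ j ∈ J, indMul (E j) (hE j) w :=
  lp_decomp0 J E hE hd hcov w

lemma lp_pythagoras' {ι : Type*} [DecidableEq ι] (J : Finset ι) (E : ι → Set Ω)
    (hE : ∀ j, MeasurableSet (E j))
    (hd : ∀ j j', j ≠ j' → Disjoint (E j) (E j'))
    (hcov : ∀ᵐ x ∂μ, ∃ j ∈ J, x ∈ E j) (w : Lp ℝ 2 μ) :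
    ‖w‖ ^ 2 = ∑ j ∈ J, ‖indMul (E j) (hE j) w‖ ^ 2 :=
  lp_pythagoras0 J E hE hd hcov w

end Bridge

theorem coreStability {Ω : Type*} [MeasurableSpace Ω] (μ : Measure Ω)
    {𝒯 : Type*} [Fintype 𝒯] [Nonempty 𝒯]
    (A : 𝒯 → Set Ω) (hAmeas : ∀ T, MeasurableSet (A T))
    (hdisj : Pairwise (Function.onFun Disjoint A))
    (hcover : μ (Set.univ \ ⋃ T, A T) = 0)
    (δ : 𝒯 → 𝒯 → ℕ)
    (Q : Lp ℝ 2 μ →L[ℝ] Lp ℝ 2 μ)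
    (q : ℝ) (hq0 : 0 < q) (hq1 : q < 1)
    (hdecay : ∀ (L L' : Set 𝒯), L.Nonempty → L'.Nonempty → ∀ u : Lp ℝ 2 μ,
      ‖indMul (⋃ T ∈ L, A T) (unionMeasurable hAmeas L)
          (Q (indMul (⋃ T ∈ L', A T) (unionMeasurable hAmeas L') u))‖
        ≤ 2 * q ^ (setDist δ L L' - 1)
          * ‖indMul (⋃ T ∈ L', A T) (unionMeasurable hAmeas L') u‖)
    (γ : ℝ) (hγ : 1 ≤ γ) (hγq : γ * q < 1)
    (ρ : Ω → ℝ) (hρmeas : Measurable ρ)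
    (ℓ : 𝒯 → ℤ) (W : ℤ → ℝ) (hW : ∀ j, 0 < W j)
    (K1 : ∀ T, ∀ᵐ x ∂(μ.restrict (A T)), |ρ x| ≤ W (ℓ T))
    (K2 : ∀ T, ∀ᵐ x ∂(μ.restrict (A T)), W (ℓ T) ≤ γ ^ 2 * ρ x)
    (K3 : ∀ T T', W (ℓ T) ≤ γ ^ (ℓ T - ℓ T') * W (ℓ T'))
    (K4 : ∀ T T', (ℓ T - ℓ T').natAbs ≤ δ T T')
    (u : Lp ℝ 2 μ) :
    eLpNorm (fun x => ρ x * (Q u : Ω → ℝ) x) 2 μ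
      ≤ ENNReal.ofReal (6 * γ ^ 3 / (1 - γ * q))
        * eLpNorm (fun x => ρ x * (u : Ω → ℝ) x) 2 μ := by
  classical
  have hγ0 : (0:ℝ) < γ := lt_of_lt_of_le one_pos hγ
  have h1γq : 0 < 1 - γ * q := by nlinarith
  set C : ℝ := 6 * γ ^ 3 / (1 - γ * q) with hCdef
  have hC0 : 0 ≤ C := by positivity
  set J : Finset ℤ := Finset.image ℓ Finset.univ with hJdef
  set Lset : ℤ → Set 𝒯 := fun j => {T | ℓ T = j} with hLsetdef
  have hEmeas : ∀ j, MeasurableSet (⋃ T ∈ Lset j, A T) :=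
    fun j => unionMeasurable hAmeas (Lset j)
  -- disjointness of the level bands
  have hEdisj : ∀ j j', j ≠ j' → Disjoint (⋃ T ∈ Lset j, A T) (⋃ T ∈ Lset j', A T) := by
    intro j j' hne
    rw [Set.disjoint_left]
    rintro x hx hx'
    simp only [Set.mem_iUnion] at hx hx'
    obtain ⟨T, hT, hxT⟩ := hx
    obtain ⟨T', hT', hxT'⟩ := hx'
    have hTT : T ≠ T' := by
      intro h
      exact hne (by rw [← hT, ← hT', h])
    exact Set.disjoint_left.1 (hdisj hTT) hxT hxT'
  -- a.e. cover
  have h0 : ∀ᵐ x ∂μ, x ∈ ⋃ T, A T := by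
    have h1 : ∀ᵐ x ∂μ, x ∉ Set.univ \ ⋃ T, A T := measure_eq_zero_iff_ae_notMem.1 hcover
    filter_upwards [h1] with x hx
    by_contra hc
    exact hx ⟨trivial, hc⟩
  have hcov : ∀ᵐ x ∂μ, ∃ j ∈ J, x ∈ ⋃ T ∈ Lset j, A T := by
    filter_upwards [h0] with x hx
    obtain ⟨T, hxT⟩ := Set.mem_iUnion.1 hx
    refine ⟨ℓ T, Finset.mem_image.2 ⟨T, Finset.mem_univ T, rfl⟩, ?_⟩
    exact Set.mem_biUnion rfl hxT
  have hLne : ∀ j ∈ J, (Lset j).Nonempty := by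
    intro j hj
    obtain ⟨T, _, hT⟩ := Finset.mem_image.1 hj
    exact ⟨T, hT⟩
  -- global a.e. bounds on ρ
  have hK1' : ∀ᵐ x ∂μ, ∀ T, x ∈ A T → |ρ x| ≤ W (ℓ T) :=
    ae_all_iff.2 fun T => (ae_restrict_iff' (hAmeas T)).1 (K1 T)
  have hK2' : ∀ᵐ x ∂μ, ∀ T, x ∈ A T → W (ℓ T) ≤ γ ^ 2 * ρ x :=
    ae_all_iff.2 fun T => (ae_restrict_iff' (hAmeas T)).1 (K2 T)
  -- ρ * w is in L²
  have hmem : ∀ w : Lp ℝ 2 μ, MemLp (fun x => ρ x * (w : Ω → ℝ) x) 2 μ := by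
    intro w
    obtain ⟨B, hB⟩ : ∃ B : ℝ, ∀ T, W (ℓ T) ≤ B :=
      ⟨Finset.univ.sup' Finset.univ_nonempty (fun T => W (ℓ T)),
        fun T => Finset.le_sup' (fun T => W (ℓ T)) (Finset.mem_univ T)⟩
    have hbd : ∀ᵐ x ∂μ, ‖ρ x * (w : Ω → ℝ) x‖ ≤ ‖B * (w : Ω → ℝ) x‖ := by
      filter_upwards [h0, hK1'] with x hx h1
      obtain ⟨T, hxT⟩ := Set.mem_iUnion.1 hx
      have hρB : |ρ x| ≤ B := le_trans (h1 T hxT) (hB T)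
      have hB0 : 0 ≤ B := le_trans (abs_nonneg _) hρB
      simp only [norm_mul, Real.norm_eq_abs]
      exact mul_le_mul_of_nonneg_right (le_trans hρB (le_abs_self B)) (abs_nonneg _)
    exact MemLp.of_le ((Lp.memLp w).const_mul B)
      ((hρmeas.aestronglyMeasurable).mul (Lp.aestronglyMeasurable w)) hbd
  have hRcoe : ∀ w : Lp ℝ 2 μ,
      ⇑((hmem w).toLp _) =ᵐ[μ] fun x => ρ x * (w : Ω → ℝ) x :=
    fun w => MemLp.coeFn_toLp _
  -- bounds on ρ on the bands
  have hρE1 : ∀ j, ∀ᵐ x ∂μ, x ∈ ⋃ T ∈ Lset j, A T → |ρ x| ≤ W j := by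
    intro j
    filter_upwards [hK1'] with x h1 hx
    simp only [Set.mem_iUnion] at hx
    obtain ⟨T, hT, hxT⟩ := hx
    have := h1 T hxT
    rwa [show ℓ T = j from hT] at this
  have hρE2 : ∀ j, ∀ᵐ x ∂μ, x ∈ ⋃ T ∈ Lset j, A T → W j ≤ γ ^ 2 * ρ x := by
    intro j
    filter_upwards [hK2'] with x h1 hx
    simp only [Set.mem_iUnion] at hx
    obtain ⟨T, hT, hxT⟩ := hx
    have := h1 T hxT
    rwa [show ℓ T = j from hT] at this
  -- F5 : weighted indicator bound, upper
  have hF5 : ∀ j, ∀ w : Lp ℝ 2 μ,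
      ‖indMul (⋃ T ∈ Lset j, A T) (hEmeas j) ((hmem w).toLp _)‖
        ≤ W j * ‖indMul (⋃ T ∈ Lset j, A T) (hEmeas j) w‖ := by
    intro j w
    have hf : ⇑(indMul (⋃ T ∈ Lset j, A T) (hEmeas j) ((hmem w).toLp _)) =ᵐ[μ]
        (⋃ T ∈ Lset j, A T).indicator (fun y => ρ y * (w : Ω → ℝ) y) := by
      filter_upwards [indMul_coeFn' _ (hEmeas j) ((hmem w).toLp _), hRcoe w] with x h1 h2
      rw [h1, Set.indicator_apply, Set.indicator_apply]
      split
      · exact h2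
      · rfl
    have hg : ⇑(W j • indMul (⋃ T ∈ Lset j, A T) (hEmeas j) w) =ᵐ[μ]
        fun y => W j * (⋃ T ∈ Lset j, A T).indicator (⇑w) y := by
      filter_upwards [Lp.coeFn_smul (W j) (indMul (⋃ T ∈ Lset j, A T) (hEmeas j) w),
        indMul_coeFn' _ (hEmeas j) w] with x h1 h2
      rw [h1]
      simp only [Pi.smul_apply, smul_eq_mul, h2]
    have hpt : ∀ᵐ x ∂μ,
        ‖(⋃ T ∈ Lset j, A T).indicator (fun y => ρ y * (w : Ω → ℝ) y) x‖
          ≤ ‖W j * (⋃ T ∈ Lset j, A T).indicator (⇑w) x‖ := by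
      filter_upwards [hρE1 j] with x h5
      by_cases hx : x ∈ ⋃ T ∈ Lset j, A T
      · rw [Set.indicator_of_mem hx, Set.indicator_of_mem hx, Real.norm_eq_abs,
          Real.norm_eq_abs, abs_mul, abs_mul]
        exact mul_le_mul_of_nonneg_right (le_trans (h5 hx) (le_abs_self _)) (abs_nonneg _)
      · rw [Set.indicator_of_notMem hx, Set.indicator_of_notMem hx, mul_zero]
    calc ‖indMul (⋃ T ∈ Lset j, A T) (hEmeas j) ((hmem w).toLp _)‖
        ≤ ‖W j • indMul (⋃ T ∈ Lset j, A T) (hEmeas j) w‖ := Lp_norm_le_of_ae2' hf hg hpt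
      _ = W j * ‖indMul (⋃ T ∈ Lset j, A T) (hEmeas j) w‖ := by
          rw [norm_smul, Real.norm_eq_abs, abs_of_pos (hW j)]
  -- F6 : weighted indicator bound, lower
  have hF6 : ∀ j,
      W j * ‖indMul (⋃ T ∈ Lset j, A T) (hEmeas j) u‖
        ≤ γ ^ 2 * ‖indMul (⋃ T ∈ Lset j, A T) (hEmeas j) ((hmem u).toLp _)‖ := by
    intro j
    have hf : ⇑(W j • indMul (⋃ T ∈ Lset j, A T) (hEmeas j) u) =ᵐ[μ]
        fun y => W j * (⋃ T ∈ Lset j, A T).indicator (⇑u) y := by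
      filter_upwards [Lp.coeFn_smul (W j) (indMul (⋃ T ∈ Lset j, A T) (hEmeas j) u),
        indMul_coeFn' _ (hEmeas j) u] with x h1 h2
      rw [h1]
      simp only [Pi.smul_apply, smul_eq_mul, h2]
    have hg : ⇑(γ ^ 2 • indMul (⋃ T ∈ Lset j, A T) (hEmeas j) ((hmem u).toLp _)) =ᵐ[μ]
        fun y => γ ^ 2 * (⋃ T ∈ Lset j, A T).indicator (fun z => ρ z * (u : Ω → ℝ) z) y := by
      filter_upwards [Lp.coeFn_smul (γ ^ 2) (indMul (⋃ T ∈ Lset j, A T) (hEmeas j)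
          ((hmem u).toLp _)),
        indMul_coeFn' _ (hEmeas j) ((hmem u).toLp _), hRcoe u] with x h1 h2 h3
      rw [h1]
      simp only [Pi.smul_apply, smul_eq_mul, h2]
      congr 1
      rw [Set.indicator_apply, Set.indicator_apply]
      split
      · exact h3
      · rfl
    have hpt : ∀ᵐ x ∂μ,
        ‖W j * (⋃ T ∈ Lset j, A T).indicator (⇑u) x‖
          ≤ ‖γ ^ 2 * (⋃ T ∈ Lset j, A T).indicator (fun z => ρ z * (u : Ω → ℝ) z) x‖ := by
      filter_upwards [hρE2 j] with x h6
      by_cases hx : x ∈ ⋃ T ∈ Lset j, A T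
      · rw [Set.indicator_of_mem hx, Set.indicator_of_mem hx, Real.norm_eq_abs,
          Real.norm_eq_abs, abs_mul, abs_mul, abs_mul, ← mul_assoc]
        have h9 : |W j| ≤ |γ ^ 2| * |ρ x| := by
          rw [abs_of_pos (hW j), abs_of_nonneg (by positivity : (0:ℝ) ≤ γ ^ 2)]
          exact le_trans (h6 hx)
            (mul_le_mul_of_nonneg_left (le_abs_self _) (by positivity))
        exact mul_le_mul_of_nonneg_right h9 (abs_nonneg _)
      · rw [Set.indicator_of_notMem hx, Set.indicator_of_notMem hx, mul_zero, mul_zero]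
    calc W j * ‖indMul (⋃ T ∈ Lset j, A T) (hEmeas j) u‖
        = ‖W j • indMul (⋃ T ∈ Lset j, A T) (hEmeas j) u‖ := by
          rw [norm_smul, Real.norm_eq_abs, abs_of_pos (hW j)]
      _ ≤ ‖γ ^ 2 • indMul (⋃ T ∈ Lset j, A T) (hEmeas j) ((hmem u).toLp _)‖ :=
          Lp_norm_le_of_ae2' hf hg hpt
      _ = γ ^ 2 * ‖indMul (⋃ T ∈ Lset j, A T) (hEmeas j) ((hmem u).toLp _)‖ := by
          rw [norm_smul, Real.norm_eq_abs, abs_of_nonneg (by positivity : (0:ℝ) ≤ γ ^ 2)]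
  -- K3 on levels
  have hK3' : ∀ j ∈ J, ∀ j' ∈ J, W j ≤ γ ^ (j - j') * W j' := by
    intro j hj j' hj'
    obtain ⟨T, hT⟩ := hLne j hj
    obtain ⟨T', hT'⟩ := hLne j' hj'
    have := K3 T T'
    rwa [show ℓ T = j from hT, show ℓ T' = j' from hT'] at this
  -- distance lower bound
  have hD : ∀ j ∈ J, ∀ j' ∈ J,
      (j - j').natAbs ≤ setDist δ (Lset j) (Lset j') := by
    intro j hj j' hj'
    obtain ⟨T₀, hT₀⟩ := hLne j hj
    obtain ⟨T₀', hT₀'⟩ := hLne j' hj'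
    have hne : {n | ∃ T ∈ Lset j, ∃ T' ∈ Lset j', δ T T' = n}.Nonempty :=
      ⟨δ T₀ T₀', T₀, hT₀, T₀', hT₀', rfl⟩
    obtain ⟨T, hT, T', hT', hd⟩ := Nat.sInf_mem hne
    rw [setDist, ← hd]
    calc (j - j').natAbs = (ℓ T - ℓ T').natAbs := by
          rw [show ℓ T = j from hT, show ℓ T' = j' from hT']
      _ ≤ δ T T' := K4 T T'
  -- the main estimate
  have hmain : ∀ j ∈ J,
      ‖indMul (⋃ T ∈ Lset j, A T) (hEmeas j) ((hmem (Q u)).toLp _)‖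
        ≤ ∑ j' ∈ J, (2 * γ ^ (j - j' + 2) * q ^ ((j - j').natAbs - 1))
            * ‖indMul (⋃ T ∈ Lset j', A T) (hEmeas j') ((hmem u).toLp _)‖ := by
    intro j hj
    have l1 := hF5 j (Q u)
    have l2 : indMul (⋃ T ∈ Lset j, A T) (hEmeas j) (Q u)
        = ∑ j' ∈ J, indMul (⋃ T ∈ Lset j, A T) (hEmeas j)
            (Q (indMul (⋃ T ∈ Lset j', A T) (hEmeas j') u)) := by
      conv_lhs => rw [show Q u = ∑ j' ∈ J, Q (indMul (⋃ T ∈ Lset j', A T) (hEmeas j') u) from by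
        rw [← map_sum]
        congr 1
        exact lp_decomp' J _ hEmeas hEdisj hcov u]
      exact indMul_sum' _ _ J _
    have l3 : ‖indMul (⋃ T ∈ Lset j, A T) (hEmeas j) (Q u)‖
        ≤ ∑ j' ∈ J, ‖indMul (⋃ T ∈ Lset j, A T) (hEmeas j)
            (Q (indMul (⋃ T ∈ Lset j', A T) (hEmeas j') u))‖ := by
      rw [l2]; exact norm_sum_le _ _
    have l4 : ∀ j' ∈ J,
        W j * ‖indMul (⋃ T ∈ Lset j, A T) (hEmeas j)
            (Q (indMul (⋃ T ∈ Lset j', A T) (hEmeas j') u))‖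
          ≤ (2 * γ ^ (j - j' + 2) * q ^ ((j - j').natAbs - 1))
            * ‖indMul (⋃ T ∈ Lset j', A T) (hEmeas j') ((hmem u).toLp _)‖ := by
      intro j' hj'
      have hdec := hdecay (Lset j) (Lset j') (hLne j hj) (hLne j' hj') u
      have hqmono : q ^ (setDist δ (Lset j) (Lset j') - 1)
          ≤ q ^ ((j - j').natAbs - 1) :=
        pow_le_pow_of_le_one hq0.le hq1.le (Nat.sub_le_sub_right (hD j hj j' hj') 1)
      have hnn : (0:ℝ) ≤ ‖indMul (⋃ T ∈ Lset j', A T) (hEmeas j') u‖ := norm_nonneg _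
      calc W j * ‖indMul (⋃ T ∈ Lset j, A T) (hEmeas j)
              (Q (indMul (⋃ T ∈ Lset j', A T) (hEmeas j') u))‖
          ≤ W j * (2 * q ^ (setDist δ (Lset j) (Lset j') - 1)
              * ‖indMul (⋃ T ∈ Lset j', A T) (hEmeas j') u‖) :=
            mul_le_mul_of_nonneg_left hdec (hW j).le
        _ ≤ W j * (2 * q ^ ((j - j').natAbs - 1)
              * ‖indMul (⋃ T ∈ Lset j', A T) (hEmeas j') u‖) := by
            refine mul_le_mul_of_nonneg_left ?_ (hW j).le
            exact mul_le_mul_of_nonneg_right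
              (mul_le_mul_of_nonneg_left hqmono (by norm_num)) hnn
        _ = 2 * q ^ ((j - j').natAbs - 1)
              * (W j * ‖indMul (⋃ T ∈ Lset j', A T) (hEmeas j') u‖) := by ring
        _ ≤ 2 * q ^ ((j - j').natAbs - 1)
              * (γ ^ (j - j') * (W j' * ‖indMul (⋃ T ∈ Lset j', A T) (hEmeas j') u‖)) := by
            refine mul_le_mul_of_nonneg_left ?_ (by positivity)
            rw [← mul_assoc]
            exact mul_le_mul_of_nonneg_right (hK3' j hj j' hj') hnn
        _ ≤ 2 * q ^ ((j - j').natAbs - 1)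
              * (γ ^ (j - j') * (γ ^ 2
                * ‖indMul (⋃ T ∈ Lset j', A T) (hEmeas j') ((hmem u).toLp _)‖)) := by
            refine mul_le_mul_of_nonneg_left
              (mul_le_mul_of_nonneg_left (hF6 j') (by positivity)) (by positivity)
        _ = (2 * γ ^ (j - j' + 2) * q ^ ((j - j').natAbs - 1))
              * ‖indMul (⋃ T ∈ Lset j', A T) (hEmeas j') ((hmem u).toLp _)‖ := by
            rw [show γ ^ (j - j' + 2) = γ ^ (j - j') * γ ^ 2 from by
              rw [zpow_add₀ hγ0.ne', show ((2:ℤ) = ((2:ℕ):ℤ)) from rfl, zpow_natCast]]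
            ring
    calc ‖indMul (⋃ T ∈ Lset j, A T) (hEmeas j) ((hmem (Q u)).toLp _)‖
        ≤ W j * ‖indMul (⋃ T ∈ Lset j, A T) (hEmeas j) (Q u)‖ := l1
      _ ≤ W j * ∑ j' ∈ J, ‖indMul (⋃ T ∈ Lset j, A T) (hEmeas j)
            (Q (indMul (⋃ T ∈ Lset j', A T) (hEmeas j') u))‖ :=
          mul_le_mul_of_nonneg_left l3 (hW j).le
      _ = ∑ j' ∈ J, W j * ‖indMul (⋃ T ∈ Lset j, A T) (hEmeas j)
            (Q (indMul (⋃ T ∈ Lset j', A T) (hEmeas j') u))‖ := Finset.mul_sum _ _ _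
      _ ≤ ∑ j' ∈ J, (2 * γ ^ (j - j' + 2) * q ^ ((j - j').natAbs - 1))
            * ‖indMul (⋃ T ∈ Lset j', A T) (hEmeas j') ((hmem u).toLp _)‖ :=
          Finset.sum_le_sum l4
  -- Schur bound
  have hKnn : ∀ j j' : ℤ, (0:ℝ) ≤ 2 * γ ^ (j - j' + 2) * q ^ ((j - j').natAbs - 1) := by
    intro j j'; positivity
  have hrow : ∀ j ∈ J, ∑ j' ∈ J, 2 * γ ^ (j - j' + 2) * q ^ ((j - j').natAbs - 1) ≤ C := by
    intro j _
    have h := Finset.sum_image (s := J) (g := fun j' => j - j')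
      (f := fun d => 2 * γ ^ (d + 2) * q ^ (d.natAbs - 1))
      (fun x _ y _ h => by have h' : j - x = j - y := h; omega)
    calc ∑ j' ∈ J, 2 * γ ^ (j - j' + 2) * q ^ ((j - j').natAbs - 1)
        = ∑ d ∈ J.image (fun j' => j - j'), 2 * γ ^ (d + 2) * q ^ (d.natAbs - 1) := h.symm
      _ ≤ C := gker_sum_le' hγ hq0 hq1 hγq _
  have hcol : ∀ j' ∈ J, ∑ j ∈ J, 2 * γ ^ (j - j' + 2) * q ^ ((j - j').natAbs - 1) ≤ C := by
    intro j' _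
    have h := Finset.sum_image (s := J) (g := fun j => j - j')
      (f := fun d => 2 * γ ^ (d + 2) * q ^ (d.natAbs - 1))
      (fun x _ y _ h => by have h' : x - j' = y - j' := h; omega)
    calc ∑ j ∈ J, 2 * γ ^ (j - j' + 2) * q ^ ((j - j').natAbs - 1)
        = ∑ d ∈ J.image (fun j => j - j'), 2 * γ ^ (d + 2) * q ^ (d.natAbs - 1) := h.symm
      _ ≤ C := gker_sum_le' hγ hq0 hq1 hγq _
  have key2 : ‖(hmem (Q u)).toLp _‖ ^ 2 ≤ C ^ 2 * ‖(hmem u).toLp _‖ ^ 2 := by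
    calc ‖(hmem (Q u)).toLp _‖ ^ 2
        = ∑ j ∈ J, ‖indMul (⋃ T ∈ Lset j, A T) (hEmeas j) ((hmem (Q u)).toLp _)‖ ^ 2 :=
          lp_pythagoras' J _ hEmeas hEdisj hcov _
      _ ≤ ∑ j ∈ J, (∑ j' ∈ J, (2 * γ ^ (j - j' + 2) * q ^ ((j - j').natAbs - 1))
            * ‖indMul (⋃ T ∈ Lset j', A T) (hEmeas j') ((hmem u).toLp _)‖) ^ 2 :=
          Finset.sum_le_sum fun j hj =>
            pow_le_pow_left₀ (norm_nonneg _) (hmain j hj) 2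
      _ ≤ C ^ 2 * ∑ j ∈ J,
            ‖indMul (⋃ T ∈ Lset j, A T) (hEmeas j) ((hmem u).toLp _)‖ ^ 2 :=
          schurBound J _ _ C hKnn hC0 hrow hcol
      _ = C ^ 2 * ‖(hmem u).toLp _‖ ^ 2 := by
          rw [← lp_pythagoras' J _ hEmeas hEdisj hcov _]
  have hnorm : ‖(hmem (Q u)).toLp _‖ ≤ C * ‖(hmem u).toLp _‖ := by
    refine le_of_pow_le_pow_left₀ two_ne_zero (by positivity) ?_
    calc ‖(hmem (Q u)).toLp _‖ ^ 2 ≤ C ^ 2 * ‖(hmem u).toLp _‖ ^ 2 := key2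
      _ = (C * ‖(hmem u).toLp _‖) ^ 2 := by ring
  have e1 : eLpNorm (fun x => ρ x * (Q u : Ω → ℝ) x) 2 μ
      = ENNReal.ofReal ‖(hmem (Q u)).toLp _‖ := by
    rw [Lp.norm_toLp, ENNReal.ofReal_toReal (hmem (Q u)).2.ne]
  have e2 : eLpNorm (fun x => ρ x * (u : Ω → ℝ) x) 2 μ
      = ENNReal.ofReal ‖(hmem u).toLp _‖ := by
    rw [Lp.norm_toLp, ENNReal.ofReal_toReal (hmem u).2.ne]
  rw [e1, e2, ← ENNReal.ofReal_mul hC0]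
  exact ENNReal.ofReal_le_ofReal hnorm

/-- Weighted `L²`-stability.  If a bounded linear operator `Q` on `L²(μ)`
satisfies the decay estimate `‖1_L Q(1_{L'} u)‖₂ ≤ 2 q^{max(δ(L,L')−1,0)} ‖1_{L'} u‖₂` with
`q ∈ (0,1)`, and `ρ` is a weight with grading `γ ≥ 1` such that `γ q < 1`, then
`‖ρ Q u‖₂ ≤ (6 γ³/(1 − γ q)) ‖ρ u‖₂` for all `u ∈ L²(μ)`. -/
theorem stmt_2 {Ω : Type*} [MeasurableSpace Ω] (μ : Measure Ω)
    {𝒯 : Type*} [Fintype 𝒯] [Nonempty 𝒯]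
    (A : 𝒯 → Set Ω) (hAmeas : ∀ T, MeasurableSet (A T))
    (hdisj : Pairwise (Function.onFun Disjoint A))
    (hApos : ∀ T, 0 < μ (A T))
    (hcover : μ (Set.univ \ ⋃ T, A T) = 0)
    (δ : 𝒯 → 𝒯 → ℕ)
    (hδ0 : ∀ T T', δ T T' = 0 ↔ T = T')
    (hδsymm : ∀ T T', δ T T' = δ T' T)
    (hδtri : ∀ T T' T'', δ T T'' ≤ δ T T' + δ T' T'')
    (Q : Lp ℝ 2 μ →L[ℝ] Lp ℝ 2 μ)
    (q : ℝ) (hq0 : 0 < q) (hq1 : q < 1)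
    (hdecay : ∀ (L L' : Set 𝒯), L.Nonempty → L'.Nonempty → ∀ u : Lp ℝ 2 μ,
      ‖indMul (⋃ T ∈ L, A T) (unionMeasurable hAmeas L)
          (Q (indMul (⋃ T ∈ L', A T) (unionMeasurable hAmeas L') u))‖
        ≤ 2 * q ^ (setDist δ L L' - 1)
          * ‖indMul (⋃ T ∈ L', A T) (unionMeasurable hAmeas L') u‖)
    (γ : ℝ) (hγ : 1 ≤ γ) (hγq : γ * q < 1)
    (ρ : Ω → ℝ) (hρmeas : Measurable ρ)
    (hρ0 : ∀ T, 0 < essInf ρ (μ.restrict (A T)))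
    (hρle : ∀ T, essInf ρ (μ.restrict (A T)) ≤ essSup ρ (μ.restrict (A T)))
    (hρgrad : ∀ T, essSup ρ (μ.restrict (A T)) ≤ γ * essInf ρ (μ.restrict (A T)))
    (hρgrad' : ∀ T T', essSup ρ (μ.restrict (A T'))
      ≤ γ ^ δ T T' * essSup ρ (μ.restrict (A T)))
    (u : Lp ℝ 2 μ) :
    eLpNorm (fun x => ρ x * (Q u : Ω → ℝ) x) 2 μ
      ≤ ENNReal.ofReal (6 * γ ^ 3 / (1 - γ * q))
        * eLpNorm (fun x => ρ x * (u : Ω → ℝ) x) 2 μ := by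
  classical
  have hγ0 : (0:ℝ) < γ := lt_of_lt_of_le one_pos hγ
  set M : 𝒯 → ℝ := fun T => essSup ρ (μ.restrict (A T)) with hMdef
  set m : 𝒯 → ℝ := fun T => essInf ρ (μ.restrict (A T)) with hmdef
  have hM0 : ∀ T, 0 < M T := fun T => lt_of_lt_of_le (hρ0 T) (hρle T)
  have hMae : ∀ T, ∀ᵐ x ∂(μ.restrict (A T)), ρ x ≤ M T := by
    intro T
    by_cases hb : Filter.IsBoundedUnder (· ≤ ·) (ae (μ.restrict (A T))) ρ
    · exact ae_le_essSup hb
    · exfalso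
      have hempty : {a : ℝ | ∀ᶠ x in ae (μ.restrict (A T)), ρ x ≤ a} = ∅ := by
        rw [Set.eq_empty_iff_forall_notMem]
        exact fun a ha => hb (Filter.isBoundedUnder_of_eventually_le ha)
      have hz : M T = 0 := by
        have h1 : M T = sInf {a : ℝ | ∀ᶠ x in ae (μ.restrict (A T)), ρ x ≤ a} :=
          Filter.limsup_eq
        rw [h1, hempty, Real.sInf_empty]
      linarith [hρ0 T, hρle T, hz]
  have hmae : ∀ T, ∀ᵐ x ∂(μ.restrict (A T)), m T ≤ ρ x := by
    intro T
    by_cases hb : Filter.IsBoundedUnder (· ≥ ·) (ae (μ.restrict (A T))) ρ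
    · exact ae_essInf_le hb
    · exfalso
      have hempty : {a : ℝ | ∀ᶠ x in ae (μ.restrict (A T)), a ≤ ρ x} = ∅ := by
        rw [Set.eq_empty_iff_forall_notMem]
        exact fun a ha => hb (Filter.isBoundedUnder_of_eventually_ge ha)
      have hz : m T = 0 := by
        have h1 : m T = sSup {a : ℝ | ∀ᶠ x in ae (μ.restrict (A T)), a ≤ ρ x} :=
          Filter.liminf_eq
        rw [h1, hempty, Real.sSup_empty]
      linarith [hρ0 T, hz]
  rcases eq_or_lt_of_le hγ with hγ1 | hγ1
  · -- case γ = 1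
    set T₀ : 𝒯 := Classical.arbitrary 𝒯 with hT₀
    have hMle : ∀ T T', M T' ≤ M T := by
      intro T T'
      have h := hρgrad' T T'
      rwa [← hγ1, one_pow, one_mul] at h
    refine coreStability μ A hAmeas hdisj hcover δ Q q hq0 hq1 hdecay γ hγ hγq ρ hρmeas
      (fun _ => 0) (fun _ => M T₀) (fun _ => hM0 T₀) ?_ ?_ ?_ ?_ u
    · intro T
      filter_upwards [hMae T, hmae T] with x h1 h2
      have hpos : 0 < ρ x := lt_of_lt_of_le (hρ0 T) h2
      rw [abs_of_pos hpos]
      exact le_trans h1 (hMle T₀ T)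
    · intro T
      filter_upwards [hmae T] with x h2
      rw [← hγ1, one_pow, one_mul]
      have h3 : M T ≤ m T := by
        have := hρgrad T
        rwa [← hγ1, one_mul] at this
      exact le_trans (hMle T T₀) (le_trans h3 (le_trans h2 (le_refl _)))
    · intro T T'
      simp
    · intro T T'
      simp
  · -- case 1 < γ
    have hγne1 : γ ≠ 1 := ne_of_gt hγ1
    set ℓ : 𝒯 → ℤ := fun T => ⌊Real.logb γ (M T)⌋ with hℓdef
    have key1 : ∀ T, γ ^ (ℓ T) ≤ M T := by
      intro T
      have h1 : γ ^ ((ℓ T : ℝ)) ≤ γ ^ Real.logb γ (M T) :=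
        (Real.rpow_le_rpow_left_iff hγ1).2 (Int.floor_le _)
      rw [Real.rpow_logb hγ0 hγne1 (hM0 T), Real.rpow_intCast] at h1
      exact h1
    have key2 : ∀ T, M T < γ ^ (ℓ T + 1) := by
      intro T
      have h1 : γ ^ Real.logb γ (M T) < γ ^ (((ℓ T + 1 : ℤ) : ℝ)) := by
        refine (Real.rpow_lt_rpow_left_iff hγ1).2 ?_
        push_cast
        exact Int.lt_floor_add_one _
      rw [Real.rpow_logb hγ0 hγne1 (hM0 T), Real.rpow_intCast] at h1
      exact h1
    refine coreStability μ A hAmeas hdisj hcover δ Q q hq0 hq1 hdecay γ hγ hγq ρ hρmeas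
      ℓ (fun j => γ ^ (j + 1)) (fun j => zpow_pos hγ0 _) ?_ ?_ ?_ ?_ u
    · -- K1
      intro T
      filter_upwards [hMae T, hmae T] with x h1 h2
      have hpos : 0 < ρ x := lt_of_lt_of_le (hρ0 T) h2
      rw [abs_of_pos hpos]
      exact le_trans h1 (key2 T).le
    · -- K2
      intro T
      filter_upwards [hmae T] with x h2
      have hdiv : M T / γ ≤ m T := by
        rw [div_le_iff₀ hγ0]
        have := hρgrad T
        linarith [hρgrad T]
      have hρx : M T / γ ≤ ρ x := le_trans hdiv h2
      have e1 : γ ^ 2 * (M T / γ) = γ * M T := by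
        field_simp
      calc γ ^ (ℓ T + 1) = γ ^ (ℓ T) * γ := by rw [zpow_add_one₀ hγ0.ne']
        _ ≤ M T * γ := mul_le_mul_of_nonneg_right (key1 T) hγ0.le
        _ = γ ^ 2 * (M T / γ) := by rw [e1]; ring
        _ ≤ γ ^ 2 * ρ x := mul_le_mul_of_nonneg_left hρx (by positivity)
    · -- K3
      intro T T'
      refine le_of_eq ?_
      rw [← zpow_add₀ hγ0.ne']
      congr 1
      ring
    · -- K4
      intro T T'
      have c1 : γ ^ (ℓ T) < γ ^ ((δ T' T : ℤ) + (ℓ T' + 1)) := by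
        calc γ ^ (ℓ T) ≤ M T := key1 T
          _ ≤ γ ^ δ T' T * M T' := hρgrad' T' T
          _ < γ ^ δ T' T * γ ^ (ℓ T' + 1) :=
            mul_lt_mul_of_pos_left (key2 T') (by positivity)
          _ = γ ^ ((δ T' T : ℤ) + (ℓ T' + 1)) := by
            rw [← zpow_natCast γ _, ← zpow_add₀ hγ0.ne']
      have c2 : γ ^ (ℓ T') < γ ^ ((δ T T' : ℤ) + (ℓ T + 1)) := by
        calc γ ^ (ℓ T') ≤ M T' := key1 T'
          _ ≤ γ ^ δ T T' * M T := hρgrad' T T'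
          _ < γ ^ δ T T' * γ ^ (ℓ T + 1) :=
            mul_lt_mul_of_pos_left (key2 T) (by positivity)
          _ = γ ^ ((δ T T' : ℤ) + (ℓ T + 1)) := by
            rw [← zpow_natCast γ _, ← zpow_add₀ hγ0.ne']
      have d1 : (ℓ T : ℤ) < (δ T' T : ℤ) + (ℓ T' + 1) := (zpow_lt_zpow_iff_right₀ hγ1).1 c1
      have d2 : (ℓ T' : ℤ) < (δ T T' : ℤ) + (ℓ T + 1) := (zpow_lt_zpow_iff_right₀ hγ1).1 c2
      have hsym : δ T' T = δ T T' := hδsymm T' T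
      omega
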